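/- Suppose a statistic value u has null density g0 and alternative density g1 on (0,1) with g1(u)/g0(u) monotonically decreasing (MLRC). Then the posterior probability of non-null given rejection, P(non-null | U < c) = p1*G1(c)/(p0*G0(c) + p1*G1(c)), is monotonically decreasing in the threshold c, where G_i(c) = ∫_0^c g_i. -/

import Mathlib

open MeasureTheory

lemma integrableOn_of_pos {g : ℝ → ℝ} {b : ℝ}
    (h : ¬ IntegrableOn g (Set.Ioo 0 b)) :
    (∫ u in Set.Ioo (0:ℝ) b, g u) = 0 :=
  integral_undef h

/-- Key inequality: G1 b * G0 a ≤ G1 a * G0 b. -/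
lemma key_ratio
    (g0 g1 : ℝ → ℝ)
    (hg0 : ∀ u ∈ Set.Ioo (0 : ℝ) 1, 0 < g0 u)
    (hg1 : ∀ u ∈ Set.Ioo (0 : ℝ) 1, 0 < g1 u)
    (hmlrc : AntitoneOn (fun u => g1 u / g0 u) (Set.Ioo 0 1))
    (G0 G1 : ℝ → ℝ)
    (hG0 : ∀ c, G0 c = ∫ u in Set.Ioo (0 : ℝ) c, g0 u)
    (hG1 : ∀ c, G1 c = ∫ u in Set.Ioo (0 : ℝ) c, g1 u)
    (hG0pos : ∀ c, 0 < c → 0 < G0 c) (hG1pos : ∀ c, 0 < c → 0 < G1 c)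
    {a b : ℝ} (ha0 : 0 < a) (hab : a < b) (hb1 : b ≤ 1) :
    G1 b * G0 a ≤ G1 a * G0 b := by
  have ha1 : a < 1 := lt_of_lt_of_le hab hb1
  have haI : a ∈ Set.Ioo (0:ℝ) 1 := ⟨ha0, ha1⟩
  -- integrability on Ioo 0 b
  have hint0 : IntegrableOn g0 (Set.Ioo 0 b) := by
    by_contra h
    have : G0 b = 0 := by rw [hG0 b]; exact integral_undef h
    exact absurd this (ne_of_gt (hG0pos b (ha0.trans hab)))
  have hint1 : IntegrableOn g1 (Set.Ioo 0 b) := by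
    by_contra h
    have : G1 b = 0 := by rw [hG1 b]; exact integral_undef h
    exact absurd this (ne_of_gt (hG1pos b (ha0.trans hab)))
  have hsub1 : Set.Ioo (0:ℝ) a ⊆ Set.Ioo 0 b := Set.Ioo_subset_Ioo le_rfl hab.le
  have hsub2 : Set.Ioo a b ⊆ Set.Ioo (0:ℝ) b := Set.Ioo_subset_Ioo ha0.le le_rfl
  -- splitting lemma
  have split : ∀ g : ℝ → ℝ, IntegrableOn g (Set.Ioo 0 b) →
      (∫ u in Set.Ioo (0:ℝ) b, g u)
        = (∫ u in Set.Ioo (0:ℝ) a, g u) + ∫ u in Set.Ioo a b, g u := by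
    intro g hg
    have h1 : IntegrableOn g (Set.Ioc 0 a) := by
      rw [integrableOn_Ioc_iff_integrableOn_Ioo]
      exact hg.mono_set hsub1
    have h2 : IntegrableOn g (Set.Ioc a b) := by
      rw [integrableOn_Ioc_iff_integrableOn_Ioo]
      exact hg.mono_set hsub2
    have hu : Set.Ioc (0:ℝ) a ∪ Set.Ioc a b = Set.Ioc 0 b :=
      Set.Ioc_union_Ioc_eq_Ioc ha0.le hab.le
    calc (∫ u in Set.Ioo (0:ℝ) b, g u) = ∫ u in Set.Ioc (0:ℝ) b, g u :=
          (integral_Ioc_eq_integral_Ioo).symm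
      _ = ∫ u in Set.Ioc (0:ℝ) a ∪ Set.Ioc a b, g u := by rw [hu]
      _ = (∫ u in Set.Ioc (0:ℝ) a, g u) + ∫ u in Set.Ioc a b, g u :=
          setIntegral_union (Set.Ioc_disjoint_Ioc_of_le le_rfl) measurableSet_Ioc h1 h2
      _ = (∫ u in Set.Ioo (0:ℝ) a, g u) + ∫ u in Set.Ioo a b, g u := by
          rw [integral_Ioc_eq_integral_Ioo, integral_Ioc_eq_integral_Ioo]
  set l := g1 a / g0 a with hl
  have hlpos : 0 < l := div_pos (hg1 a haI) (hg0 a haI)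
  -- pointwise bounds
  have hub : ∀ u ∈ Set.Ioo a b, g1 u ≤ l * g0 u := by
    intro u hu
    have huI : u ∈ Set.Ioo (0:ℝ) 1 := ⟨ha0.trans hu.1, lt_of_lt_of_le hu.2 hb1⟩
    have h := hmlrc haI huI hu.1.le
    exact (div_le_iff₀ (hg0 u huI)).mp (by simpa using h)
  have hlb : ∀ u ∈ Set.Ioo (0:ℝ) a, l * g0 u ≤ g1 u := by
    intro u hu
    have huI : u ∈ Set.Ioo (0:ℝ) 1 := ⟨hu.1, hu.2.trans ha1⟩
    have h := hmlrc huI haI hu.2.le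
    have := (le_div_iff₀ (hg0 u huI)).mp (by simpa using h)
    linarith
  -- integral comparisons
  have hI1 : (∫ u in Set.Ioo a b, g1 u) ≤ l * ∫ u in Set.Ioo a b, g0 u := by
    rw [← integral_const_mul]
    exact setIntegral_mono_on (hint1.mono_set hsub2)
      ((hint0.mono_set hsub2).const_mul l) measurableSet_Ioo hub
  have hI0nonneg : 0 ≤ ∫ u in Set.Ioo a b, g0 u := by
    apply setIntegral_nonneg measurableSet_Ioo
    intro u hu
    exact (hg0 u ⟨ha0.trans hu.1, lt_of_lt_of_le hu.2 hb1⟩).le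
  have hGa : l * G0 a ≤ G1 a := by
    rw [hG0 a, hG1 a, ← integral_const_mul]
    exact setIntegral_mono_on ((hint0.mono_set hsub1).const_mul l)
      (hint1.mono_set hsub1) measurableSet_Ioo hlb
  have hG0a : 0 < G0 a := hG0pos a ha0
  have e0 : G0 b = G0 a + ∫ u in Set.Ioo a b, g0 u := by
    rw [hG0 b, hG0 a]; exact split g0 hint0
  have e1 : G1 b = G1 a + ∫ u in Set.Ioo a b, g1 u := by
    rw [hG1 b, hG1 a]; exact split g1 hint1
  rw [e0, e1]
  nlinarith [mul_le_mul_of_nonneg_right hI1 hG0a.le,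
    mul_le_mul_of_nonneg_right hGa hI0nonneg]

theorem posterior_nonnull_antitone
    (p0 p1 : ℝ) (hp0 : 0 < p0) (hp0' : p0 < 1) (hp1 : p1 = 1 - p0)
    (g0 g1 : ℝ → ℝ)
    (hg0 : ∀ u ∈ Set.Ioo (0 : ℝ) 1, 0 < g0 u)
    (hg1 : ∀ u ∈ Set.Ioo (0 : ℝ) 1, 0 < g1 u)
    (hc0 : ContinuousOn g0 (Set.Ioo 0 1)) (hc1 : ContinuousOn g1 (Set.Ioo 0 1))
    (hmlrc : AntitoneOn (fun u => g1 u / g0 u) (Set.Ioo 0 1))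
    (G0 G1 : ℝ → ℝ)
    (hG0 : ∀ c, G0 c = ∫ u in Set.Ioo (0 : ℝ) c, g0 u)
    (hG1 : ∀ c, G1 c = ∫ u in Set.Ioo (0 : ℝ) c, g1 u)
    (hG0pos : ∀ c, 0 < c → 0 < G0 c) (hG1pos : ∀ c, 0 < c → 0 < G1 c) :
    AntitoneOn (fun c => p1 * G1 c / (p0 * G0 c + p1 * G1 c))
      (Set.Ioc (0 : ℝ) 1) := by
  have hp1pos : 0 < p1 := by rw [hp1]; linarith
  intro a ha b hb hab
  rcases eq_or_lt_of_le hab with rfl | hlt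
  · exact le_refl _
  have key : G1 b * G0 a ≤ G1 a * G0 b :=
    key_ratio g0 g1 hg0 hg1 hmlrc G0 G1 hG0 hG1 hG0pos hG1pos ha.1 hlt hb.2
  have hDa : 0 < p0 * G0 a + p1 * G1 a := by
    have := hG0pos a ha.1; have := hG1pos a ha.1; positivity
  have hDb : 0 < p0 * G0 b + p1 * G1 b := by
    have := hG0pos b hb.1; have := hG1pos b hb.1; positivity
  simp only
  rw [div_le_div_iff₀ hDb hDa]
  nlinarith [mul_pos hp0 hp1pos]
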